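/- Let g ≥ 1, ρ, v ∈ ℝ^g, τ ∈ ℝ, K ∈ ℝ, n ∈ ℤ, m ∈ ℝ^g, and define A : ℝ^g × ℝ → ℝ^g × ℝ by A(y,z) = (y + ρ, z + ⟨v,y⟩ + τ) and the character e_{m,n}(y,z) = exp(2πı(⟨m,y⟩ + nKz)). Then for every natural number j and all (y,z) ∈ ℝ^g × ℝ, e_{m,n}(A^j(y,z)) = exp(2πı( j(⟨m,ρ⟩ + nKτ) + nK·(j(j−1)/2)·⟨v,ρ⟩ )) · e_{m + jnKv, n}(y,z). -/
import Mathlib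


/-- Transformation rule for characters under iterates of the skew-shift (core identity of
Lemma 5.3): with `e_{m,n}(y,z) = exp(2πı(⟨m,y⟩ + nKz))` and
`A(y,z) = (y + ρ, z + ⟨v,y⟩ + τ)`, one has
`e_{m,n} ∘ A^j = exp(2πı(j(⟨m,ρ⟩ + nKτ) + nK (j(j−1)/2) ⟨v,ρ⟩)) · e_{m + jnKv, n}`. -/
theorem stmt_11 (g : ℕ) (hg : 1 ≤ g) (ρ v m : Fin g → ℝ) (τ K : ℝ) (n : ℤ)
    (A : (Fin g → ℝ) × ℝ → (Fin g → ℝ) × ℝ)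
    (hA : ∀ y : Fin g → ℝ, ∀ z : ℝ, A (y, z) = (y + ρ, z + (∑ i, v i * y i) + τ))
    (e : (Fin g → ℝ) → ℤ → (Fin g → ℝ) → ℝ → ℂ)
    (he : ∀ m' : Fin g → ℝ, ∀ n' : ℤ, ∀ y : Fin g → ℝ, ∀ z : ℝ,
      e m' n' y z = Complex.exp
        (((2 * Real.pi * ((∑ i, m' i * y i) + (n' : ℝ) * K * z) : ℝ) : ℂ) * Complex.I)) :
    ∀ j : ℕ, ∀ y : Fin g → ℝ, ∀ z : ℝ,
      e m n (A^[j] (y, z)).1 (A^[j] (y, z)).2 =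
        Complex.exp
          (((2 * Real.pi *
            ((j : ℝ) * ((∑ i, m i * ρ i) + (n : ℝ) * K * τ) +
              (n : ℝ) * K * ((j : ℝ) * ((j : ℝ) - 1) / 2) * (∑ i, v i * ρ i)) : ℝ) : ℂ)
            * Complex.I) *
          e (m + ((j : ℝ) * (n : ℝ) * K) • v) n y z := by
  have key : ∀ j : ℕ, ∀ y : Fin g → ℝ, ∀ z : ℝ,
      A^[j] (y, z) = (y + (j : ℝ) • ρ,
        z + (j : ℝ) * (∑ i, v i * y i) + (j : ℝ) * τ +
          ((j : ℝ) * ((j : ℝ) - 1) / 2) * (∑ i, v i * ρ i)) := by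
    intro j
    induction j with
    | zero =>
      intro y z
      simp
    | succ j ih =>
      intro y z
      rw [Function.iterate_succ_apply', ih, hA]
      have hsum : (∑ i, v i * (y + (j : ℝ) • ρ) i)
          = (∑ i, v i * y i) + (j : ℝ) * (∑ i, v i * ρ i) := by
        simp only [Pi.add_apply, Pi.smul_apply, smul_eq_mul, mul_add, Finset.sum_add_distrib,
          Finset.mul_sum]
        congr 1
        exact Finset.sum_congr rfl fun i _ => by ring
      refine Prod.ext ?_ ?_
      · funext i
        simp only [Pi.add_apply, Pi.smul_apply, smul_eq_mul]
        push_cast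
        ring
      · show z + (j : ℝ) * (∑ i, v i * y i) + (j : ℝ) * τ +
            ((j : ℝ) * ((j : ℝ) - 1) / 2) * (∑ i, v i * ρ i) +
            (∑ i, v i * (y + (j : ℝ) • ρ) i) + τ = _
        rw [hsum]
        push_cast
        ring
  intro j y z
  rw [key j y z]
  simp only [he]
  rw [← Complex.exp_add]
  congr 1
  rw [← add_mul, ← Complex.ofReal_add]
  congr 1
  have h1 : (∑ i, m i * (y + (j : ℝ) • ρ) i)
      = (∑ i, m i * y i) + (j : ℝ) * (∑ i, m i * ρ i) := by
    simp only [Pi.add_apply, Pi.smul_apply, smul_eq_mul, mul_add, Finset.sum_add_distrib,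
      Finset.mul_sum]
    congr 1
    exact Finset.sum_congr rfl fun i _ => by ring
  have h2 : (∑ i, (m + ((j : ℝ) * (n : ℝ) * K) • v) i * y i)
      = (∑ i, m i * y i) + (j : ℝ) * (n : ℝ) * K * (∑ i, v i * y i) := by
    simp only [Pi.add_apply, Pi.smul_apply, smul_eq_mul, add_mul, Finset.sum_add_distrib,
      Finset.mul_sum]
    congr 1
    exact Finset.sum_congr rfl fun i _ => by ring
  rw [h1, h2]
  push_cast
  ring
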